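/- Let p(z) = q(z) g(z^2) where deg q = m, deg g = (n-m)/2, q(0) ≠ 0, and the finite Hurwitz matrix H_m(q) of q is nonsingular. Then the n×n finite Hurwitz matrix H_n(p) has rank exactly (n+m)/2. -/

import Mathlib

/-- The finite Hurwitz matrix of a real polynomial `p` of degree `n`: with
`a k := p.coeff (n - k)` for `0 ≤ k ≤ n` (so `p(z) = a 0 * z^n + ... + a n`)
and `a k := 0` otherwise, the entry `(i, j)` (0-based) is `a (2j - i + 1)`. -/
noncomputable def HurwitzOfPoly (p : Polynomial ℝ) :
    Matrix (Fin p.natDegree) (Fin p.natDegree) ℝ := fun i j =>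
  if h : 0 ≤ 2 * (j : ℤ) - (i : ℤ) + 1 ∧ 2 * (j : ℤ) - (i : ℤ) + 1 ≤ (p.natDegree : ℤ)
  then p.coeff (p.natDegree - (2 * (j : ℤ) - (i : ℤ) + 1).toNat) else 0


open Polynomial Matrix Finset

/-- Coefficient of a polynomial at an integer index (zero outside `[0, ∞)`). -/
noncomputable def ccoef (f : Polynomial ℝ) (t : ℤ) : ℝ :=
  if 0 ≤ t then f.coeff t.toNat else 0

lemma ccoef_neg {f : Polynomial ℝ} {t : ℤ} (h : t < 0) : ccoef f t = 0 := by
  simp [ccoef, not_le.mpr h]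

lemma ccoef_nonneg {f : Polynomial ℝ} {t : ℤ} (h : 0 ≤ t) :
    ccoef f t = f.coeff t.toNat := if_pos h

lemma ccoef_gt {f : Polynomial ℝ} {t : ℤ} (h : (f.natDegree : ℤ) < t) : ccoef f t = 0 := by
  have h0 : 0 ≤ t := le_of_lt (lt_of_le_of_lt (Int.ofNat_nonneg _) h)
  rw [ccoef, if_pos h0]
  exact Polynomial.coeff_eq_zero_of_natDegree_lt (by omega)

lemma hurwitz_eq_ccoef (f : Polynomial ℝ) (i j : Fin f.natDegree) :
    HurwitzOfPoly f i j = ccoef f ((f.natDegree : ℤ) + (i : ℤ) - 2 * (j : ℤ) - 1) := by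
  unfold HurwitzOfPoly ccoef
  by_cases h : 0 ≤ 2 * (j : ℤ) - (i : ℤ) + 1 ∧ 2 * (j : ℤ) - (i : ℤ) + 1 ≤ (f.natDegree : ℤ)
  · rw [dif_pos h, if_pos (by omega)]
    congr 1
    omega
  · rw [dif_neg h]
    rcases not_and_or.mp h with h1 | h2
    · rw [if_pos (by omega)]
      exact (Polynomial.coeff_eq_zero_of_natDegree_lt (by omega)).symm
    · rw [if_neg (by omega)]

lemma sum_range_int (F : ℤ → ℝ) (a : ℤ) (N : ℕ) :
    ∑ l ∈ Finset.range N, F (a + l) = ∑ u ∈ Finset.Icc a (a + N - 1), F u := by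
  refine Finset.sum_nbij' (fun l : ℕ => a + (l : ℤ)) (fun u : ℤ => (u - a).toNat) ?_ ?_ ?_ ?_ ?_
  · intro l hl; simp only [Finset.mem_range] at hl; simp only [Finset.mem_Icc]; omega
  · intro u hu; simp only [Finset.mem_Icc] at hu; simp only [Finset.mem_range]; omega
  · intro l hl; simp only [Finset.mem_range] at hl
    show ((a + (l : ℤ) - a).toNat) = l; omega
  · intro u hu; simp only [Finset.mem_Icc] at hu
    show a + (((u - a).toNat : ℕ) : ℤ) = u; omega
  · intro l _; rfl

lemma ccoef_finset_sum {ι : Type*} (s : Finset ι) (f : ι → Polynomial ℝ) (t : ℤ) :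
    ccoef (∑ i ∈ s, f i) t = ∑ i ∈ s, ccoef (f i) t := by
  unfold ccoef
  split
  · simp [Polynomial.finset_sum_coeff]
  · simp

lemma ccoef_C_mul (a : ℝ) (f : Polynomial ℝ) (t : ℤ) :
    ccoef (Polynomial.C a * f) t = a * ccoef f t := by
  unfold ccoef
  split
  · rw [Polynomial.coeff_C_mul]
  · rw [mul_zero]

lemma ccoef_mul_X_pow (f : Polynomial ℝ) (e : ℕ) (t : ℤ) :
    ccoef (f * Polynomial.X ^ e) t = ccoef f (t - e) := by
  unfold ccoef
  by_cases h0 : 0 ≤ t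
  · rw [if_pos h0, Polynomial.coeff_mul_X_pow']
    by_cases he : (e : ℤ) ≤ t
    · rw [if_pos (by omega), if_pos (by omega)]
      congr 1
      omega
    · rw [if_neg (by omega), if_neg (by omega)]
  · rw [if_neg h0, if_neg (by omega)]

lemma ccoef_mul_comp (q g : Polynomial ℝ) (t : ℤ) :
    ccoef (q * g.comp (Polynomial.X ^ 2)) t =
      ∑ s ∈ Finset.range (g.natDegree + 1), g.coeff s * ccoef q (t - 2 * s) := by
  have hg : g.comp (Polynomial.X ^ 2) =
      ∑ s ∈ Finset.range (g.natDegree + 1), Polynomial.C (g.coeff s) * Polynomial.X ^ (2 * s) := by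
    conv_lhs => rw [g.as_sum_range' (g.natDegree + 1) (lt_add_one _)]
    rw [Polynomial.sum_comp]
    refine Finset.sum_congr rfl fun s _ => ?_
    rw [Polynomial.monomial_comp, ← pow_mul]
  have hexp : q * g.comp (Polynomial.X ^ 2) =
      ∑ s ∈ Finset.range (g.natDegree + 1),
        Polynomial.C (g.coeff s) * (q * Polynomial.X ^ (2 * s)) := by
    rw [hg, Finset.mul_sum]
    exact Finset.sum_congr rfl fun s _ => by ring
  rw [hexp, ccoef_finset_sum]
  refine Finset.sum_congr rfl fun s _ => ?_
  rw [ccoef_C_mul, ccoef_mul_X_pow]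
  norm_cast

lemma key_sum (q g : Polynomial ℝ) (n m k : ℕ) (hm : m = q.natDegree)
    (hk : k = g.natDegree) (hn : n = m + 2 * k) (i j : ℕ) (hj : j < n) :
    ccoef (q * g.comp (Polynomial.X ^ 2)) ((n : ℤ) + i - 2 * j - 1) =
      ∑ l ∈ Finset.range n,
        ccoef q ((m : ℤ) + i - 2 * l - 1) * ccoef g ((k : ℤ) + l - j) := by
  set t : ℤ := (n : ℤ) + i - 2 * j - 1 with ht
  set F : ℤ → ℝ := fun u => ccoef q (t - 2 * u) * ccoef g u with hF
  have hL : ccoef (q * g.comp (Polynomial.X ^ 2)) t = ∑ u ∈ Finset.Icc (0 : ℤ) k, F u := by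
    rw [ccoef_mul_comp, ← hk]
    have h' := sum_range_int F 0 (k + 1)
    simp only [zero_add, Nat.cast_add, Nat.cast_one, add_sub_cancel_right] at h'
    rw [← h']
    refine Finset.sum_congr rfl fun s hs => ?_
    simp only [Finset.mem_range] at hs
    rw [hF]
    simp only []
    rw [ccoef_nonneg (Int.ofNat_nonneg s), Int.toNat_natCast, mul_comm]
  have hR : (∑ l ∈ Finset.range n,
      ccoef q ((m : ℤ) + i - 2 * l - 1) * ccoef g ((k : ℤ) + l - j))
      = ∑ u ∈ Finset.Icc ((k : ℤ) - j) ((k : ℤ) - j + n - 1), F u := by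
    have := sum_range_int F ((k : ℤ) - j) n
    rw [← this]
    refine Finset.sum_congr rfl fun l hl => ?_
    simp only [Finset.mem_range] at hl
    rw [hF]
    simp only []
    congr 2
    · omega
    · ring
  rw [hL, hR]
  -- both equal the sum over the union interval
  have hvanish_small : ∀ u : ℤ, u < 0 ∨ (k : ℤ) < u → F u = 0 := by
    intro u hu
    rcases hu with hu | hu
    · rw [hF]; simp only []; rw [ccoef_neg hu, mul_zero]
    · rw [hF]; simp only []; rw [ccoef_gt (show (g.natDegree : ℤ) < u by omega), mul_zero]
  have hvanish_big : ∀ u : ℤ, u < (k : ℤ) - j ∨ (k : ℤ) - j + n - 1 < u → F u = 0 := by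
    intro u hu
    rcases hu with hu | hu
    · rw [hF]; simp only []; rw [ccoef_gt (show (q.natDegree : ℤ) < t - 2 * u by omega), zero_mul]
    · rw [hF]; simp only []; rw [ccoef_gt (show (g.natDegree : ℤ) < u by omega), mul_zero]
  have h1 : ∑ u ∈ Finset.Icc (0 : ℤ) k, F u
      = ∑ u ∈ Finset.Icc (min 0 ((k : ℤ) - j)) (max (k : ℤ) ((k : ℤ) - j + n - 1)), F u := by
    refine Finset.sum_subset (Finset.Icc_subset_Icc (min_le_left _ _) (le_max_left _ _)) ?_
    intro u hu hnu
    simp only [Finset.mem_Icc] at hu hnu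
    exact hvanish_small u (by omega)
  have h2 : ∑ u ∈ Finset.Icc ((k : ℤ) - j) ((k : ℤ) - j + n - 1), F u
      = ∑ u ∈ Finset.Icc (min 0 ((k : ℤ) - j)) (max (k : ℤ) ((k : ℤ) - j + n - 1)), F u := by
    refine Finset.sum_subset (Finset.Icc_subset_Icc (min_le_right _ _) (le_max_right _ _)) ?_
    intro u hu hnu
    simp only [Finset.mem_Icc] at hu hnu
    exact hvanish_big u (by omega)
  rw [h1, h2]

/-- If `p(z) = q(z) * g(z^2)` with `q(0) ≠ 0` and the finite Hurwitz matrix of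
`q` nonsingular, then the finite Hurwitz matrix of `p` has rank exactly
`(n + m)/2`, where `n = deg p` and `m = deg q`. -/
theorem hurwitz_rank (q g : Polynomial ℝ) (hq : q ≠ 0) (hgne : g ≠ 0)
    (hq0 : q.coeff 0 ≠ 0) (hHq : (HurwitzOfPoly q).det ≠ 0) :
    (HurwitzOfPoly (q * g.comp (Polynomial.X ^ 2))).rank =
      ((q * g.comp (Polynomial.X ^ 2)).natDegree + q.natDegree) / 2 := by
  classical
  set m := q.natDegree with hm
  set k := g.natDegree with hk
  set p := q * g.comp (Polynomial.X ^ 2) with hp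
  set n := p.natDegree with hn0
  have hgc : g.comp (Polynomial.X ^ 2) ≠ 0 := by
    rw [← Polynomial.expand_eq_comp_X_pow]
    exact fun h => hgne ((Polynomial.expand_eq_zero (by norm_num)).mp h)
  have hn : n = m + 2 * k := by
    rw [hn0, hp, Polynomial.natDegree_mul hq hgc, Polynomial.natDegree_comp,
      Polynomial.natDegree_X_pow, hm, hk]
    ring
  have hrn : m + k ≤ n := by omega
  set A : Matrix (Fin n) (Fin n) ℝ :=
    fun i l => ccoef q ((m : ℤ) + ((i : ℕ) : ℤ) - 2 * ((l : ℕ) : ℤ) - 1) with hA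
  set B : Matrix (Fin n) (Fin n) ℝ :=
    fun l j => ccoef g ((k : ℤ) + ((l : ℕ) : ℤ) - ((j : ℕ) : ℤ)) with hB
  have hH : HurwitzOfPoly p = A * B := by
    ext i j
    rw [hurwitz_eq_ccoef, Matrix.mul_apply]
    rw [key_sum q g n m k hm hk hn i j j.isLt]
    rw [← Fin.sum_univ_eq_sum_range
      (fun l => ccoef q ((m : ℤ) + ((i : ℕ) : ℤ) - 2 * (l : ℤ) - 1)
        * ccoef g ((k : ℤ) + (l : ℤ) - ((j : ℕ) : ℤ))) n]
  have hdetB : IsUnit B.det := by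
    have htri : B.BlockTriangular id := by
      intro l j hlt
      simp only [hB]
      refine ccoef_gt ?_
      have : (j : ℕ) < (l : ℕ) := hlt
      rw [← hk]
      omega
    rw [Matrix.det_of_upperTriangular htri, isUnit_iff_ne_zero]
    refine Finset.prod_ne_zero_iff.mpr fun l _ => ?_
    simp only [hB]
    have h0 : (k : ℤ) + ((l : ℕ) : ℤ) - ((l : ℕ) : ℤ) = (k : ℤ) := by ring
    rw [h0, ccoef_nonneg (Int.ofNat_nonneg k), Int.toNat_natCast, hk,
      Polynomial.coeff_natDegree]
    exact Polynomial.leadingCoeff_ne_zero.mpr hgne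
  rw [hH, Matrix.rank_mul_eq_left_of_isUnit_det B A hdetB]
  -- now: A.rank = (n + m) / 2
  set cf : Fin (m + k) → Fin n := fun l => ⟨(l : ℕ), lt_of_lt_of_le l.isLt hrn⟩ with hcf
  -- upper bound
  have hupper : A.rank ≤ m + k := by
    set P : Matrix (Fin (m + k)) (Fin n) ℝ :=
      fun l j => if (l : ℕ) = (j : ℕ) then 1 else 0 with hP
    have hfac : A = A.submatrix id cf * P := by
      ext i j
      rw [Matrix.mul_apply]
      by_cases hj : (j : ℕ) < m + k
      · rw [Finset.sum_eq_single (⟨(j : ℕ), hj⟩ : Fin (m + k))]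
        · simp only [Matrix.submatrix_apply, hP, hcf, id]
          rw [if_pos trivial, mul_one]
        · intro b _ hb
          simp only [hP]
          rw [if_neg (fun hc => hb (Fin.ext hc)), mul_zero]
        · intro hmem; exact absurd (Finset.mem_univ _) hmem
      · have hi := i.isLt
        have hz : A i j = 0 := by
          simp only [hA]
          exact ccoef_neg (by omega)
        rw [hz]
        refine (Finset.sum_eq_zero fun l _ => ?_).symm
        have hl := l.isLt
        simp only [hP]
        rw [if_neg (by omega), mul_zero]
    calc A.rank = (A.submatrix id cf * P).rank := by rw [← hfac]
      _ ≤ (A.submatrix id cf).rank := Matrix.rank_mul_le_left _ _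
      _ ≤ Fintype.card (Fin (m + k)) := Matrix.rank_le_card_width _
      _ = m + k := Fintype.card_fin _
  -- lower bound
  set rf : Fin (m + k) → Fin n := fun s =>
    if h : (s : ℕ) < m then ⟨(s : ℕ), by omega⟩
    else ⟨2 * (s : ℕ) + 1 - m, by have := s.isLt; omega⟩ with hrf
  have hrfval : ∀ x : Fin (m + k),
      ((rf x : Fin n) : ℕ) = if (x : ℕ) < m then (x : ℕ) else 2 * (x : ℕ) + 1 - m := by
    intro x
    simp only [hrf]
    by_cases hx : (x : ℕ) < m
    · rw [dif_pos hx, if_pos hx]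
    · rw [dif_neg hx, if_neg hx]
  have hcfval : ∀ x : Fin (m + k), ((cf x : Fin n) : ℕ) = (x : ℕ) := fun x => by
    simp only [hcf]
  have hSrank : (A.submatrix rf cf).rank ≤ A.rank := by
    set Rsel : Matrix (Fin (m + k)) (Fin n) ℝ := fun s i => if rf s = i then 1 else 0 with hRsel
    set Csel : Matrix (Fin n) (Fin (m + k)) ℝ := fun i t => if cf t = i then 1 else 0 with hCsel
    have h1 : Rsel * A * Csel = A.submatrix rf cf := by
      ext s t
      rw [Matrix.mul_apply]
      have h2 : ∀ jj : Fin n, (Rsel * A) s jj = A (rf s) jj := by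
        intro jj
        rw [Matrix.mul_apply, Finset.sum_eq_single (rf s)]
        · simp only [hRsel]; rw [if_pos trivial, one_mul]
        · intro b _ hb
          simp only [hRsel]
          rw [if_neg (fun hc => hb hc.symm), zero_mul]
        · intro hmem; exact absurd (Finset.mem_univ _) hmem
      simp_rw [h2]
      rw [Finset.sum_eq_single (cf t)]
      · simp only [hCsel, Matrix.submatrix_apply]
        rw [if_pos trivial, mul_one]
      · intro b _ hb
        simp only [hCsel]
        rw [if_neg (fun hc => hb hc.symm), mul_zero]
      · intro hmem; exact absurd (Finset.mem_univ _) hmem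
    calc (A.submatrix rf cf).rank = (Rsel * A * Csel).rank := by rw [h1]
      _ ≤ (Rsel * A).rank := Matrix.rank_mul_le_left _ _
      _ ≤ A.rank := Matrix.rank_mul_le_right _ _
  have hrankS : (A.submatrix rf cf).rank = m + k := by
    set C : Matrix (Fin k) (Fin m) ℝ :=
      fun s l => ccoef q ((m : ℤ) + ((m : ℤ) + 2 * ((s : ℕ) : ℤ) + 1) - 2 * ((l : ℕ) : ℤ) - 1)
      with hC
    set D : Matrix (Fin k) (Fin k) ℝ :=
      fun s t => ccoef q (2 * ((s : ℕ) : ℤ) - 2 * ((t : ℕ) : ℤ)) with hD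
    have hsub : (A.submatrix rf cf).submatrix
        (finSumFinEquiv : Fin m ⊕ Fin k ≃ Fin (m + k))
        (finSumFinEquiv : Fin m ⊕ Fin k ≃ Fin (m + k))
        = Matrix.fromBlocks (HurwitzOfPoly q) 0 C D := by
      ext i j
      rcases i with i | i <;> rcases j with j | j <;>
        simp only [Matrix.submatrix_apply, finSumFinEquiv_apply_left,
          finSumFinEquiv_apply_right, Matrix.fromBlocks_apply₁₁, Matrix.fromBlocks_apply₁₂,
          Matrix.fromBlocks_apply₂₁, Matrix.fromBlocks_apply₂₂,
          Matrix.zero_apply] <;> simp only [hA, hC, hD]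
      · -- top-left : HurwitzOfPoly q
        rw [hurwitz_eq_ccoef q i j]
        have h1 := hrfval (Fin.castAdd k i)
        simp only [Fin.coe_castAdd] at h1
        rw [if_pos i.isLt] at h1
        rw [h1]
        simp only [hcfval, Fin.coe_castAdd, hm]
      · -- top-right : zero
        have h1 := hrfval (Fin.castAdd k i)
        simp only [Fin.coe_castAdd] at h1
        rw [if_pos i.isLt] at h1
        rw [h1]
        simp only [hcfval, Fin.coe_natAdd]
        refine ccoef_neg ?_
        have := i.isLt
        push_cast
        omega
      · -- bottom-left : C
        have h1 := hrfval (Fin.natAdd m i)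
        simp only [Fin.coe_natAdd] at h1
        rw [if_neg (by omega)] at h1
        rw [h1]
        simp only [hcfval, Fin.coe_castAdd]
        congr 1
        push_cast
        omega
      · -- bottom-right : D
        have h1 := hrfval (Fin.natAdd m i)
        simp only [Fin.coe_natAdd] at h1
        rw [if_neg (by omega)] at h1
        rw [h1]
        simp only [hcfval, Fin.coe_natAdd]
        congr 1
        push_cast
        omega
    have hdetD : D.det = q.coeff 0 ^ k := by
      have htriD : D.BlockTriangular OrderDual.toDual := by
        intro s t hst
        simp only [hD]
        refine ccoef_neg ?_
        have : (s : ℕ) < (t : ℕ) := hst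
        omega
      rw [Matrix.det_of_lowerTriangular D htriD]
      have hdiag : ∀ s : Fin k, D s s = q.coeff 0 := by
        intro s
        simp only [hD]
        have h0 : 2 * ((s : ℕ) : ℤ) - 2 * ((s : ℕ) : ℤ) = 0 := by ring
        rw [h0, ccoef_nonneg le_rfl, Int.toNat_zero]
      simp only [hdiag]
      rw [Finset.prod_const, Finset.card_univ, Fintype.card_fin]
    have hdetS : (A.submatrix rf cf).det ≠ 0 := by
      rw [← Matrix.det_submatrix_equiv_self
        (finSumFinEquiv : Fin m ⊕ Fin k ≃ Fin (m + k)) (A.submatrix rf cf), hsub,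
        Matrix.det_fromBlocks_zero₁₂, hdetD]
      exact mul_ne_zero hHq (pow_ne_zero _ hq0)
    rw [Matrix.rank_of_isUnit _ ((Matrix.isUnit_iff_isUnit_det _).mpr
      (isUnit_iff_ne_zero.mpr hdetS)), Fintype.card_fin]
  have hlower : m + k ≤ A.rank := hrankS ▸ hSrank
  omega
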